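/- Let o be a complete noetherian local ring with maximal ideal m and residue field k, and let R be a local o-algebra whose structure homomorphism o → R is local and which is finitely generated as an o-module. Let M be a finitely generated R-module which is flat as an o-module. If M ⊗_o k is a free module over R ⊗_o k, then M is a free R-module; if moreover M ≠ 0, then R is flat as an o-module. -/

import Mathlib

open IsLocalRing
open scoped TensorProduct

set_option maxHeartbeats 2000000
set_option synthInstance.maxHeartbeats 200000

/-- Let `o` be a complete noetherian local ring with maximal ideal `m`
and residue field `k`, and `R` a local `o`-algebra with local structure map which is
finite as an `o`-module.  Let `M` be a finitely generated `R`-module flat over `o`.  If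
`M ⊗_o k = M/mM` is free over `R ⊗_o k = R/mR`, then `M` is a free `R`-module; if
moreover `M ≠ 0`, then `R` is flat over `o`. -/
theorem free_of_flat_of_free_special_fibre
    (o : Type) [CommRing o] [IsLocalRing o] [IsNoetherianRing o]
    [IsAdicComplete (maximalIdeal o) o]
    (R : Type) [CommRing R] [IsLocalRing R] [Algebra o R]
    [IsLocalHom (algebraMap o R)] [Module.Finite o R]
    (M : Type) [AddCommGroup M] [Module o M] [Module R M] [IsScalarTower o R M]
    [Module.Finite R M] (hMflat : Module.Flat o M)
    (hfree : Module.Free (R ⧸ Ideal.map (algebraMap o R) (maximalIdeal o))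
      (M ⧸ (Ideal.map (algebraMap o R) (maximalIdeal o) • (⊤ : Submodule R M)))) :
    Module.Free R M ∧ (Nontrivial M → Module.Flat o R) := by
  classical
  haveI := hMflat
  set m : Ideal o := maximalIdeal o with hm
  set I : Ideal R := Ideal.map (algebraMap o R) m with hI
  set Q : Type := M ⧸ (I • (⊤ : Submodule R M) : Submodule R M) with hQ
  -- `I` is contained in the maximal ideal of `R`
  have hIle : I ≤ maximalIdeal R := by
    rw [hI, Ideal.map_le_iff_le_comap]
    intro a ha
    rw [Ideal.mem_comap, mem_maximalIdeal, mem_nonunits_iff]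
    intro hu
    exact ha (isUnit_of_map_unit (algebraMap o R) a hu)
  -- compatibility of scalars on the quotient
  have hsmul : ∀ (r : R) (q : Q), (Ideal.Quotient.mk I r) • q = r • q := by
    intro r q
    obtain ⟨x, rfl⟩ := Submodule.Quotient.mk_surjective _ q
    rfl
  haveI : IsScalarTower R (R ⧸ I) Q := by
    constructor
    intro r c q
    obtain ⟨s, rfl⟩ := Ideal.Quotient.mk_surjective c
    have h1 : r • (Ideal.Quotient.mk I s) = Ideal.Quotient.mk I (r * s) := by
      rw [Algebra.smul_def, Ideal.Quotient.algebraMap_eq, ← map_mul]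
    simp only [h1, hsmul, mul_smul]
  haveI : Module.Finite R Q := by
    unfold Q; infer_instance
  haveI : Module.Finite (R ⧸ I) Q := Module.Finite.of_restrictScalars_finite R _ _
  -- choose a finite basis of the special fibre and lift it
  set ι : Type := Module.Free.ChooseBasisIndex (R ⧸ I) Q with hι
  haveI : Fintype ι := Module.Free.ChooseBasisIndex.fintype _ _
  set b : Module.Basis ι (R ⧸ I) Q := Module.Free.chooseBasis _ _ with hb
  choose mm hmm using fun i : ι =>
    Submodule.Quotient.mk_surjective (I • (⊤ : Submodule R M) : Submodule R M) (b i)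
  set f : (ι → R) →ₗ[R] M := Fintype.linearCombination R mm with hf
  -- the image of `f` in the quotient
  have hmk : ∀ c : ι → R, (Submodule.Quotient.mk (f c) : Q)
      = ∑ i, (Ideal.Quotient.mk I (c i)) • b i := by
    intro c
    rw [hf, Fintype.linearCombination_apply, ← Submodule.mkQ_apply, map_sum]
    refine Finset.sum_congr rfl fun i _ => ?_
    rw [map_smul, Submodule.mkQ_apply, hmm, hsmul]
  -- surjectivity of `f` via Nakayama
  have hjac : I ≤ Ideal.jacobson ⊥ := by
    rw [IsLocalRing.jacobson_eq_maximalIdeal (⊥ : Ideal R) bot_ne_top]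
    exact hIle
  have hsup : (⊤ : Submodule R M) ≤ LinearMap.range f ⊔ I • (⊤ : Submodule R M) := by
    intro x _
    choose c hc using fun i : ι =>
      Ideal.Quotient.mk_surjective (b.repr (Submodule.Quotient.mk x : Q) i)
    have hxc : (Submodule.Quotient.mk (f c) : Q) = Submodule.Quotient.mk x := by
      rw [hmk]
      have : ∀ i, (Ideal.Quotient.mk I (c i)) • b i
          = (b.repr (Submodule.Quotient.mk x : Q) i) • b i := by
        intro i; rw [hc]
      rw [Finset.sum_congr rfl fun i _ => this i, b.sum_repr]
    have hd : f c - x ∈ (I • (⊤ : Submodule R M) : Submodule R M) :=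
      (Submodule.Quotient.eq _).mp hxc
    have : x = f c - (f c - x) := (sub_sub_cancel _ _).symm
    rw [this]
    exact Submodule.sub_mem _ (Submodule.mem_sup_left ⟨c, rfl⟩)
      (Submodule.mem_sup_right hd)
  have hrange : LinearMap.range f = ⊤ := by
    have := Submodule.le_of_le_smul_of_le_jacobson_bot
      (N := LinearMap.range f) (N' := (⊤ : Submodule R M)) (Module.finite_def.mp ‹Module.Finite R M›) hjac
      (le_trans hsup (sup_le_sup_left (smul_mono_right _ le_top) _))
    exact top_unique this
  have hfsurj : Function.Surjective f := LinearMap.range_eq_top.mp hrange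
  -- Noetherian hypotheses
  haveI : IsNoetherian o R := isNoetherian_of_isNoetherianRing_of_finite o R
  haveI : IsNoetherianRing R := isNoetherian_of_tower o (inferInstance : IsNoetherian o R)
  set K : Submodule R (ι → R) := LinearMap.ker f with hK
  -- the kernel is contained in `I • ⊤`
  have hKle : K ≤ (I • (⊤ : Submodule R (ι → R)) : Submodule R (ι → R)) := by
    intro x hx
    have h0 : (Submodule.Quotient.mk (f x) : Q) = 0 := by
      rw [LinearMap.mem_ker.mp hx]; rfl
    rw [hmk] at h0
    have hcoef : ∀ i, Ideal.Quotient.mk I (x i) = 0 := by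
      have this : ⇑(b.repr (∑ i, (Ideal.Quotient.mk I (x i)) • b i))
          = fun i => Ideal.Quotient.mk I (x i) := b.repr_sum_self _
      rw [h0] at this
      intro i
      have := congrFun this.symm i
      simpa using this
    have hxi : ∀ i, x i ∈ I := fun i => Ideal.Quotient.eq_zero_iff_mem.mp (hcoef i)
    have hxsum : x = ∑ i, Pi.single i (x i) := (Finset.univ_sum_single x).symm
    rw [hxsum]
    refine Submodule.sum_mem _ fun i _ => ?_
    have : Pi.single i (x i) = x i • (Pi.single i (1 : R) : ι → R) := by
      ext j
      by_cases h : j = i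
      · subst h; simp
      · simp [Pi.single_eq_of_ne h]
    rw [this]
    exact Submodule.smul_mem_smul (hxi i) trivial
  -- flatness: the kernel is contained in `I • K`
  set K₀ : Submodule o (ι → R) := K.restrictScalars o with hK₀
  set f₀ : (ι → R) →ₗ[o] M := f.restrictScalars o with hf₀
  have hex : Function.Exact K₀.subtype f₀ := by
    rw [LinearMap.exact_iff]
    rw [Submodule.range_subtype]
    rfl
  have hT : Function.Exact (LinearMap.lTensor (↥m) K₀.subtype)
      (LinearMap.lTensor (↥m) f₀) := lTensor_exact (↥m) hex hfsurj
  -- multiplication maps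
  set μF : (↥m) ⊗[o] (ι → R) →ₗ[o] (ι → R) :=
    TensorProduct.lift ((LinearMap.lsmul o (ι → R)).comp m.subtype) with hμF
  set μM : (↥m) ⊗[o] M →ₗ[o] M :=
    TensorProduct.lift ((LinearMap.lsmul o M).comp m.subtype) with hμM
  have hμMinj : Function.Injective μM := by
    have h1 : Function.Injective (LinearMap.rTensor M m.subtype) :=
      Module.Flat.rTensor_preserves_injective_linearMap m.subtype m.injective_subtype
    have h2 : μM = (TensorProduct.lid o M).toLinearMap.comp (LinearMap.rTensor M m.subtype) := by
      apply TensorProduct.ext'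
      intro a x
      simp [hμM]
    rw [h2]
    exact (TensorProduct.lid o M).injective.comp h1
  have hnat : f₀.comp μF = μM.comp (LinearMap.lTensor (↥m) f₀) := by
    apply TensorProduct.ext'
    intro a y
    simp [hμF, hμM, hf₀]
  have hKsmul : K ≤ I • K := by
    intro x hx
    -- x lies in m • ⊤ as o-submodule
    have hxm : x ∈ (m • (⊤ : Submodule o (ι → R)) : Submodule o (ι → R)) := by
      have hRstable : ∀ (r : R) (y : ι → R),
          y ∈ (m • (⊤ : Submodule o (ι → R)) : Submodule o (ι → R)) →
          r • y ∈ (m • (⊤ : Submodule o (ι → R)) : Submodule o (ι → R)) := by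
        intro r y hy
        refine Submodule.smul_induction_on hy (fun a ha z _ => ?_) (fun y₁ y₂ h1 h2 => ?_)
        · rw [smul_comm]
          exact Submodule.smul_mem_smul ha trivial
        · rw [smul_add]; exact Submodule.add_mem _ h1 h2
      have key : ∀ r ∈ I, ∀ y : ι → R,
          r • y ∈ (m • (⊤ : Submodule o (ι → R)) : Submodule o (ι → R)) := by
        intro r hr
        rw [hI, Ideal.map] at hr
        refine Submodule.span_induction (p := fun r _ => ∀ y : ι → R,
          r • y ∈ (m • (⊤ : Submodule o (ι → R)) : Submodule o (ι → R))) ?_ ?_ ?_ ?_ hr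
        · rintro _ ⟨a, ha, rfl⟩ y
          rw [algebraMap_smul]
          exact Submodule.smul_mem_smul ha trivial
        · intro y; rw [zero_smul]; exact Submodule.zero_mem _
        · intro r₁ r₂ _ _ h1 h2 y
          rw [add_smul]; exact Submodule.add_mem _ (h1 y) (h2 y)
        · intro s r₁ _ h1 y
          rw [smul_eq_mul, mul_smul]
          exact hRstable s _ (h1 y)
      exact Submodule.smul_induction_on (hKle hx)
        (fun r hr y _ => key r hr y)
        (fun y₁ y₂ h1 h2 => Submodule.add_mem _ h1 h2)
    -- x is in the range of μF
    have hxrange : x ∈ LinearMap.range μF := by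
      refine Submodule.smul_le.mpr (fun a ha y _ => ?_) hxm
      exact ⟨(⟨a, ha⟩ : ↥m) ⊗ₜ y, by simp [hμF]⟩
    obtain ⟨t, ht⟩ := hxrange
    have h0 : μM (LinearMap.lTensor (↥m) f₀ t) = 0 := by
      rw [← LinearMap.comp_apply, ← hnat, LinearMap.comp_apply, ht]
      exact hx
    have ht0 : LinearMap.lTensor (↥m) f₀ t = 0 := by
      apply hμMinj
      rw [h0, map_zero]
    obtain ⟨u, hu⟩ := (hT t).mp ht0
    have : ∀ u : (↥m) ⊗[o] K₀, μF (LinearMap.lTensor (↥m) K₀.subtype u)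
        ∈ (I • K : Submodule R (ι → R)) := by
      intro u
      refine TensorProduct.induction_on u ?_ ?_ ?_
      · rw [map_zero, map_zero]; exact Submodule.zero_mem _
      · rintro a k
        have : μF (LinearMap.lTensor (↥m) K₀.subtype (a ⊗ₜ k)) = (a : o) • (k : ι → R) := by
          simp [hμF]
        rw [this, ← algebraMap_smul R (a : o)]
        exact Submodule.smul_mem_smul (Ideal.mem_map_of_mem _ a.2) k.2
      · intro u₁ u₂ h1 h2
        rw [map_add, map_add]
        exact Submodule.add_mem _ h1 h2
    rw [← ht, ← hu]
    exact this u
  -- Nakayama: the kernel is zero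
  have hKbot : K = ⊥ :=
    Submodule.eq_bot_of_le_smul_of_le_jacobson_bot I K (IsNoetherian.noetherian K) hKsmul hjac
  have hfinj : Function.Injective f := by
    rw [← LinearMap.ker_eq_bot]
    exact hKbot
  set e : (ι → R) ≃ₗ[R] M := LinearEquiv.ofBijective f ⟨hfinj, hfsurj⟩ with he
  refine ⟨Module.Free.of_equiv e, ?_⟩
  intro hMnt
  -- ι is nonempty
  have hne : Nonempty ι := by
    by_contra h
    rw [not_nonempty_iff] at h
    have : Subsingleton (ι → R) := inferInstance
    have : Subsingleton M := e.symm.toEquiv.subsingleton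
    exact (not_subsingleton M) this
  obtain ⟨i₀⟩ := hne
  have hFflat : Module.Flat o (ι → R) :=
    Module.Flat.of_linearEquiv (e.restrictScalars o : (ι → R) ≃ₗ[o] M).symm.symm
  exact Module.Flat.of_retract
    ((LinearMap.single R (fun _ : ι => R) i₀).restrictScalars o)
    ((LinearMap.proj i₀ : (ι → R) →ₗ[R] R).restrictScalars o)
    (by ext r; simp)
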